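/- Let f_1, …, f_s ∈ 𝕋[x_1,…,x_n]. Then Z(f_1,…,f_s) = ∅ (there is no a ∈ 𝕋^n with f_i(a) ∈ 𝕌̄ for all i) if and only if some f_i is a constant polynomial C c with tangible value c ∈ ℝ. -/

import Mathlib

/-- The extended tropical semiring `𝕋`: tangible reals `(a, false)`,
ghost reals `(a, true)`, and `none` = `-∞`. -/
def T : Type := Option (ℝ × Bool)

namespace T

/-- The tangible element of value `a`. -/
def tang (a : ℝ) : T := some (a, false)

/-- The ghost element `a^ν` of value `a`. -/
def ghost (a : ℝ) : T := some (a, true)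

/-- Tropical addition on `𝕋`. -/
noncomputable def add : T → T → T
  | none, y => y
  | some p, none => some p
  | some (a, s), some (b, t) =>
      if a < b then some (b, t) else if b < a then some (a, s) else some (a, true)

/-- Tropical multiplication on `𝕋`. -/
noncomputable def mul : T → T → T
  | none, _ => none
  | some _, none => none
  | some (a, s), some (b, t) => some (a + b, s || t)

lemma add_assoc' : ∀ x y z : T, add (add x y) z = add x (add y z) := by
  rintro (_ | ⟨a, s⟩) (_ | ⟨b, t⟩) (_ | ⟨c, u⟩) <;>
    simp only [add] <;>
    (try unfold T) <;>
    (try split_ifs) <;>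
    simp only [add] <;>
    (try unfold T) <;>
    (try split_ifs) <;>
    first
      | rfl
      | (exfalso; linarith)
      | (refine congrArg some ?_; refine Prod.ext ?_ ?_ <;>
          first | rfl | linarith | simp)

lemma add_comm' : ∀ x y : T, add x y = add y x := by
  rintro (_ | ⟨a, s⟩) (_ | ⟨b, t⟩) <;>
    simp only [add] <;>
    (try unfold T) <;>
    (try split_ifs) <;>
    first
      | rfl
      | (exfalso; linarith)
      | (refine congrArg some ?_; refine Prod.ext ?_ ?_ <;>
          first | rfl | linarith | simp)

lemma mul_assoc' : ∀ x y z : T, mul (mul x y) z = mul x (mul y z) := by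
  rintro (_ | ⟨a, s⟩) (_ | ⟨b, t⟩) (_ | ⟨c, u⟩) <;>
    simp [mul, add_assoc, Bool.or_assoc] <;> rfl

lemma mul_comm' : ∀ x y : T, mul x y = mul y x := by
  rintro (_ | ⟨a, s⟩) (_ | ⟨b, t⟩) <;> simp [mul, add_comm, Bool.or_comm] <;> rfl

lemma left_distrib' : ∀ x y z : T, mul x (add y z) = add (mul x y) (mul x z) := by
  rintro (_ | ⟨a, s⟩) (_ | ⟨b, t⟩) (_ | ⟨c, u⟩) <;>
    simp only [add, mul] <;>
    (try unfold T) <;>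
    (try split_ifs) <;>
    simp only [add, mul] <;>
    (try unfold T) <;>
    (try split_ifs) <;>
    first
      | rfl
      | (exfalso; linarith)
      | (refine congrArg some ?_; refine Prod.ext ?_ ?_ <;>
          first | rfl | linarith | simp)

noncomputable instance : Zero T := ⟨none⟩
noncomputable instance : One T := ⟨some (0, false)⟩
noncomputable instance : Add T := ⟨add⟩
noncomputable instance : Mul T := ⟨mul⟩

noncomputable instance : CommSemiring T where
  add := (· + ·)
  zero := 0
  add_assoc := add_assoc'
  zero_add := fun x => by cases x <;> rfl
  add_zero := fun x => by cases x <;> rfl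
  add_comm := add_comm'
  mul := (· * ·)
  one := 1
  mul_assoc := mul_assoc'
  one_mul := fun x => by
    show mul (some (0, false)) x = x
    rcases x with _ | ⟨a, s⟩ <;> simp [mul] <;> rfl
  mul_one := fun x => by
    show mul x (some (0, false)) = x
    rcases x with _ | ⟨a, s⟩ <;> simp [mul] <;> rfl
  mul_comm := mul_comm'
  zero_mul := fun x => by cases x <;> rfl
  mul_zero := fun x => by cases x <;> rfl
  left_distrib := left_distrib'
  right_distrib := fun x y z => by
    show mul (add x y) z = add (mul x z) (mul y z)
    rw [mul_comm', left_distrib', mul_comm' z x, mul_comm' z y]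
  nsmul := nsmulRec

/-- Membership in the ghost part `𝕌̄ = 𝕌 ∪ {-∞}` of `𝕋`. -/
def isGhost : T → Prop
  | none => True
  | some (_, s) => s = true

/-- Membership in the tangible part `ℝ ∪ {-∞}` of `𝕋`. -/
def isTangible : T → Prop
  | none => True
  | some (_, s) => s = false

/-- The underlying real value (junk value `0` at `-∞`); this is `π` on elements `≠ -∞`. -/
def val : T → ℝ
  | none => 0
  | some (a, _) => a

/-- The ghost map `ν`. -/
def nu : T → T
  | none => none
  | some (a, _) => some (a, true)

end T

namespace T

/-- The model value in the half line `[0,∞)`: `-∞ ↦ 0`, an element of value `a ↦ exp a`. -/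
noncomputable def gval : T → ℝ
  | none => 0
  | some (a, _) => Real.exp a

lemma nu_isGhost : ∀ x : T, isGhost (nu x)
  | none => trivial
  | some (_, _) => rfl

lemma gval_injOn_tang : Set.InjOn gval {x : T | isTangible x} := by
  rintro (_ | ⟨a, s⟩) hx (_ | ⟨b, t⟩) hy h <;>
    simp only [gval, Set.mem_setOf_eq, isTangible] at hx hy h
  · rfl
  · exact absurd h.symm (Real.exp_pos b).ne'
  · exact absurd h (Real.exp_pos a).ne'
  · rw [Real.exp_eq_exp] at h; subst hx; subst hy; subst h; rfl

lemma gval_injOn_ghost : Set.InjOn gval {x : T | isGhost x} := by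
  rintro (_ | ⟨a, s⟩) hx (_ | ⟨b, t⟩) hy h <;>
    simp only [gval, Set.mem_setOf_eq, isGhost] at hx hy h
  · rfl
  · exact absurd h.symm (Real.exp_pos b).ne'
  · exact absurd h (Real.exp_pos a).ne'
  · rw [Real.exp_eq_exp] at h; subst hx; subst hy; subst h; rfl

lemma gval_image_tang : gval '' {x : T | isTangible x} = Set.Ici 0 := by
  ext y
  constructor
  · rintro ⟨(_ | ⟨a, s⟩), hx, rfl⟩
    · exact Set.self_mem_Ici
    · exact le_of_lt (by simpa [gval] using Real.exp_pos a)
  · intro hy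
    rcases eq_or_lt_of_le (Set.mem_Ici.mp hy : (0 : ℝ) ≤ y) with h | h
    · exact ⟨none, trivial, h⟩
    · exact ⟨some (Real.log y, false), rfl, by simp [gval, Real.exp_log h]⟩

lemma gval_image_ghost : gval '' {x : T | isGhost x} = Set.Ici 0 := by
  ext y
  constructor
  · rintro ⟨(_ | ⟨a, s⟩), hx, rfl⟩
    · exact Set.self_mem_Ici
    · exact le_of_lt (by simpa [gval] using Real.exp_pos a)
  · intro hy
    rcases eq_or_lt_of_le (Set.mem_Ici.mp hy : (0 : ℝ) ≤ y) with h | h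
    · exact ⟨none, trivial, h⟩
    · exact ⟨some (Real.log y, true), rfl, by simp [gval, Real.exp_log h]⟩

/-- The closed sets of the topology on `𝕋`: both the tangible and the ghost layers are
closed in the model `[0,∞)` of `𝕌̄`, and the ghost image of the tangible layer is
contained in the set. -/
def TIsClosed (W : Set T) : Prop :=
  IsClosed (gval '' (W ∩ {x | isTangible x})) ∧
  IsClosed (gval '' (W ∩ {x | isGhost x})) ∧
  nu '' (W ∩ {x | isTangible x}) ⊆ W ∩ {x | isGhost x}

/-- The topology on `𝕋`. -/
noncomputable instance : TopologicalSpace T :=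
  TopologicalSpace.ofClosed {W | TIsClosed W}
    (by
      refine ⟨?_, ?_, ?_⟩ <;> simp [TIsClosed])
    (fun A hA => by
      rcases A.eq_empty_or_nonempty with rfl | hne
      · rw [Set.sInter_empty]
        refine ⟨?_, ?_, ?_⟩
        · rw [Set.univ_inter, gval_image_tang]; exact isClosed_Ici
        · rw [Set.univ_inter, gval_image_ghost]; exact isClosed_Ici
        · rintro y ⟨x, ⟨-, _⟩, rfl⟩
          exact ⟨trivial, nu_isGhost x⟩
      · have : Nonempty A := hne.to_subtype
        have h1 : (⋂₀ A) ∩ {x : T | isTangible x}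
            = ⋂ (W : A), ((W : Set T) ∩ {x | isTangible x}) := by
          ext x
          simp only [Set.mem_inter_iff, Set.mem_sInter, Set.mem_iInter, Set.mem_setOf_eq]
          constructor
          · rintro ⟨h, ht⟩ W; exact ⟨h W W.2, ht⟩
          · intro h
            obtain ⟨W, hW⟩ := hne
            exact ⟨fun V hV => (h ⟨V, hV⟩).1, (h ⟨W, hW⟩).2⟩
        have h2 : (⋂₀ A) ∩ {x : T | isGhost x}
            = ⋂ (W : A), ((W : Set T) ∩ {x | isGhost x}) := by
          ext x
          simp only [Set.mem_inter_iff, Set.mem_sInter, Set.mem_iInter, Set.mem_setOf_eq]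
          constructor
          · rintro ⟨h, ht⟩ W; exact ⟨h W W.2, ht⟩
          · intro h
            obtain ⟨W, hW⟩ := hne
            exact ⟨fun V hV => (h ⟨V, hV⟩).1, (h ⟨W, hW⟩).2⟩
        refine ⟨?_, ?_, ?_⟩
        · rw [h1, Set.InjOn.image_iInter_eq
            (gval_injOn_tang.mono (Set.iUnion_subset fun W => Set.inter_subset_right))]
          exact isClosed_iInter fun W => (hA W.2).1
        · rw [h2, Set.InjOn.image_iInter_eq
            (gval_injOn_ghost.mono (Set.iUnion_subset fun W => Set.inter_subset_right))]
          exact isClosed_iInter fun W => (hA W.2).2.1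
        · rintro y ⟨x, ⟨hx, hxt⟩, rfl⟩
          refine ⟨fun W hW => ((hA hW).2.2 ⟨x, ⟨hx W hW, hxt⟩, rfl⟩).1, nu_isGhost x⟩)
    (fun A hA B hB => by
      have h1 : (A ∪ B) ∩ {x : T | isTangible x}
          = (A ∩ {x | isTangible x}) ∪ (B ∩ {x | isTangible x}) :=
        Set.union_inter_distrib_right A B _
      have h2 : (A ∪ B) ∩ {x : T | isGhost x}
          = (A ∩ {x | isGhost x}) ∪ (B ∩ {x | isGhost x}) :=
        Set.union_inter_distrib_right A B _
      refine ⟨?_, ?_, ?_⟩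
      · rw [h1, Set.image_union]; exact hA.1.union hB.1
      · rw [h2, Set.image_union]; exact hA.2.1.union hB.2.1
      · rintro y ⟨x, ⟨hx, hxt⟩, rfl⟩
        rcases hx with hxA | hxB
        · have h := hA.2.2 ⟨x, ⟨hxA, hxt⟩, rfl⟩
          exact ⟨Or.inl h.1, h.2⟩
        · have h := hB.2.2 ⟨x, ⟨hxB, hxt⟩, rfl⟩
          exact ⟨Or.inr h.1, h.2⟩)

end T

namespace TAux

open T

lemma isGhost_mul_left {x : T} (y : T) (hx : T.isGhost x) : T.isGhost (x * y) := by
  rcases x with _ | ⟨a, s⟩ <;> rcases y with _ | ⟨b, t⟩ <;>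
    first
      | trivial
      | (simp only [T.isGhost] at hx ⊢
         show (s || t) = true
         simp [hx])

lemma isGhost_mul_right {x : T} (y : T) (hx : T.isGhost x) : T.isGhost (y * x) := by
  rw [mul_comm]; exact isGhost_mul_left y hx

lemma isGhost_add {x y : T} (hx : T.isGhost x) (hy : T.isGhost y) : T.isGhost (x + y) := by
  rcases x with _ | ⟨a, s⟩ <;> rcases y with _ | ⟨b, t⟩ <;>
    try assumption
  show T.isGhost (T.add (some (a, s)) (some (b, t)))
  simp only [T.isGhost] at hx hy
  simp only [T.add]
  (try unfold T)
  split_ifs <;> simp [hx, hy, T.isGhost]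

lemma isGhost_sum {ι : Type*} (s : Finset ι) (g : ι → T)
    (h : ∀ i ∈ s, T.isGhost (g i)) : T.isGhost (∑ i ∈ s, g i) :=
  Finset.sum_induction g T.isGhost (fun _ _ => isGhost_add) trivial h

lemma isGhost_prod {ι : Type*} {s : Finset ι} {g : ι → T} {j : ι}
    (hj : j ∈ s) (hg : T.isGhost (g j)) : T.isGhost (∏ i ∈ s, g i) := by
  classical
  rw [← Finset.mul_prod_erase s g hj]
  exact isGhost_mul_left _ hg

/-- `x` is a ghost element of value strictly greater than `r`. -/
def Big (r : ℝ) (x : T) : Prop := ∃ a : ℝ, r < a ∧ x = some (a, true)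

lemma Big_add_ghost {r : ℝ} {x y : T} (hx : Big r x) (hy : T.isGhost y) :
    Big r (x + y) := by
  obtain ⟨a, hra, rfl⟩ := hx
  rcases y with _ | ⟨b, t⟩
  · exact ⟨a, hra, rfl⟩
  · simp only [T.isGhost] at hy
    subst hy
    show Big r (T.add (some (a, true)) (some (b, true)))
    simp only [T.add]
    (try unfold T)
    split_ifs with h1 h2
    · exact ⟨b, lt_trans hra h1, rfl⟩
    · exact ⟨a, hra, rfl⟩
    · exact ⟨a, hra, rfl⟩

lemma isGhost_c_add_big {r : ℝ} {c x : T} (hc : T.val c ≤ r) (hx : Big r x) :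
    T.isGhost (c + x) := by
  obtain ⟨a, hra, rfl⟩ := hx
  rcases c with _ | ⟨cv, s⟩
  · show T.isGhost (T.add none (some (a, true))); rfl
  · simp only [T.val] at hc
    show T.isGhost (T.add (some (cv, s)) (some (a, true)))
    simp only [T.add]
    have h1 : cv < a := lt_of_le_of_lt hc hra
    (try unfold T)
    rw [if_pos h1]
    rfl

lemma ghost_pow (M : ℝ) : ∀ k : ℕ, ∃ b : Bool, (T.ghost M) ^ k = some (M * k, b) := by
  intro k
  induction k with
  | zero => exact ⟨false, by simp; rfl⟩
  | succ m ih =>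
    obtain ⟨b, hb⟩ := ih
    refine ⟨b || true, ?_⟩
    rw [pow_succ, hb]
    show T.mul (some (M * m, b)) (some (M, true)) = _
    simp only [T.mul]
    congr 2
    push_cast
    ring

lemma prod_ghost_pow {n : ℕ} (M : ℝ) (d : Fin n →₀ ℕ) (s : Finset (Fin n)) :
    ∃ b : Bool, (∏ j ∈ s, (T.ghost M) ^ (d j)) = some (M * (∑ j ∈ s, (d j : ℝ)), b) := by
  classical
  induction s using Finset.induction_on with
  | empty => exact ⟨false, by simp; rfl⟩
  | insert a s' hj ih =>
    obtain ⟨b, hb⟩ := ih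
    obtain ⟨ba, hba⟩ := ghost_pow M (d a)
    refine ⟨ba || b, ?_⟩
    rw [Finset.prod_insert hj, Finset.sum_insert hj, hb, hba]
    show T.mul (some (M * (d a), ba)) (some (M * _, b)) = _
    simp only [T.mul]
    congr 2
    ring

/-- Key lemma: a polynomial that is not a tangible constant evaluates to a ghost
value at the all-ghost point of sufficiently large value. -/
lemma key (n : ℕ) (f : MvPolynomial (Fin n) T)
    (hf : ¬ ∃ c : ℝ, f = MvPolynomial.C (T.tang c)) :
    ∃ B : ℝ, ∀ M : ℝ, B ≤ M → T.isGhost (MvPolynomial.eval (fun _ => T.ghost M) f) := by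
  classical
  by_cases hc : f = MvPolynomial.C (MvPolynomial.coeff 0 f)
  · refine ⟨0, fun M _ => ?_⟩
    rw [hc, MvPolynomial.eval_C]
    rcases h : MvPolynomial.coeff 0 f with _ | ⟨a, b⟩
    · trivial
    · cases b
      · exact absurd ⟨a, by rw [hc, h]; rfl⟩ hf
      · rfl
  · have hd : ∃ d ∈ f.support, d ≠ 0 := by
      by_contra h
      push_neg at h
      apply hc
      apply MvPolynomial.ext
      intro m
      rw [MvPolynomial.coeff_C]
      split_ifs with hm
      · rw [← hm]
      · exact MvPolynomial.notMem_support_iff.mp fun hmem => hm (h m hmem).symm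
    obtain ⟨d0, hd0s, hd0⟩ := hd
    have hq : MvPolynomial.coeff d0 f ≠ 0 := MvPolynomial.mem_support_iff.mp hd0s
    rcases hqe : MvPolynomial.coeff d0 f with _ | ⟨qv, qb⟩
    · exact absurd hqe hq
    set r : ℝ := T.val (MvPolynomial.coeff 0 f) with hr
    refine ⟨max 0 (r - qv + 1), fun M hM => ?_⟩
    have hM0 : 0 ≤ M := le_trans (le_max_left _ _) hM
    have hM1 : r - qv + 1 ≤ M := le_trans (le_max_right _ _) hM
    set g : (Fin n →₀ ℕ) → T :=
      fun d => MvPolynomial.coeff d f * ∏ j, (T.ghost M) ^ d j with hg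
    have hsum : MvPolynomial.eval (fun _ => T.ghost M) f = ∑ d ∈ f.support, g d := by
      rw [MvPolynomial.eval_eq']
    rw [hsum]
    -- each term with d ≠ 0 is ghost
    have hterm : ∀ d : Fin n →₀ ℕ, d ≠ 0 → T.isGhost (g d) := by
      intro d hdne
      obtain ⟨j, hj⟩ : ∃ j, d j ≠ 0 := by
        by_contra hh
        push_neg at hh
        exact hdne (Finsupp.ext hh)
      refine isGhost_mul_right _ (isGhost_prod (Finset.mem_univ j) ?_)
      obtain ⟨b, hb⟩ := ghost_pow M (d j)
      obtain ⟨m, hm⟩ := Nat.exists_eq_succ_of_ne_zero hj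
      rw [hm, pow_succ]
      exact isGhost_mul_right _ (by rfl)
    -- the d0 term is Big r
    have hBig : Big r (g d0) := by
      have hk : (1 : ℝ) ≤ ∑ j, (d0 j : ℝ) := by
        obtain ⟨j, hj⟩ : ∃ j, d0 j ≠ 0 := by
          by_contra hh
          push_neg at hh
          exact hd0 (Finsupp.ext hh)
        have h1 : (1 : ℝ) ≤ (d0 j : ℝ) := by
          exact_mod_cast Nat.one_le_iff_ne_zero.mpr hj
        refine le_trans h1 (Finset.single_le_sum (f := fun i => (d0 i : ℝ))
          (fun i _ => by positivity) (Finset.mem_univ j))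
      obtain ⟨b, hb⟩ := prod_ghost_pow M d0 Finset.univ
      have hghost : T.isGhost (g d0) := hterm d0 hd0
      have hgval : g d0 = some (qv + M * (∑ j, (d0 j : ℝ)), qb || b) := by
        rw [hg]
        simp only
        rw [hqe, hb]
        rfl
      rw [hgval] at hghost ⊢
      simp only [T.isGhost] at hghost
      refine ⟨qv + M * (∑ j, (d0 j : ℝ)), ?_, by rw [hghost]⟩
      have : M * 1 ≤ M * (∑ j, (d0 j : ℝ)) := by
        apply mul_le_mul_of_nonneg_left hk hM0
      nlinarith
    by_cases h0 : (0 : Fin n →₀ ℕ) ∈ f.support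
    · rw [← Finset.add_sum_erase _ g h0]
      have hg0 : g 0 = MvPolynomial.coeff 0 f := by
        simp [hg]
      rw [hg0]
      have hd0e : d0 ∈ f.support.erase 0 := Finset.mem_erase.mpr ⟨hd0, hd0s⟩
      rw [← Finset.add_sum_erase _ g hd0e]
      refine isGhost_c_add_big le_rfl (Big_add_ghost hBig ?_)
      refine isGhost_sum _ _ fun d hdm => ?_
      exact hterm d (Finset.mem_erase.mp (Finset.mem_of_mem_erase hdm)).1
    · refine isGhost_sum _ _ fun d hdm => ?_
      exact hterm d fun h => h0 (h ▸ hdm)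

end TAux

/-- Corollary `thm:emptyVar`: `Z(f_1,…,f_s) = ∅` iff one of the `f_i`
is a tangible constant. -/
theorem tropical_empty_iff_tangible_constant (n s : ℕ)
    (f : Fin s → MvPolynomial (Fin n) T) :
    (¬ ∃ a : Fin n → T, ∀ i, T.isGhost (MvPolynomial.eval a (f i)))
      ↔ ∃ i, ∃ c : ℝ, f i = MvPolynomial.C (T.tang c) := by
  constructor
  · intro hA
    by_contra hB
    push_neg at hB
    apply hA
    have hkey : ∀ i, ∃ B : ℝ, ∀ M : ℝ, B ≤ M →
        T.isGhost (MvPolynomial.eval (fun _ => T.ghost M) (f i)) := by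
      intro i
      refine TAux.key n (f i) ?_
      rintro ⟨c, hc⟩
      exact hB i c hc
    choose B hBspec using hkey
    obtain ⟨M, hM⟩ := Finite.exists_le B
    exact ⟨fun _ => T.ghost M, fun i => hBspec i M (hM i)⟩
  · rintro ⟨i, c, hi⟩ ⟨a, ha⟩
    have h := ha i
    rw [hi, MvPolynomial.eval_C] at h
    simp only [T.tang, T.isGhost] at h
    exact Bool.false_ne_true h
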